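/- The i-th derivative of the resolvent map s ↦ (sE - A)^{-1} at a point σ where σE - A is invertible equals (-1)^i · i! · ((σE - A)^{-1}E)^i (σE - A)^{-1}. -/

import Mathlib

open Matrix

attribute [local instance] Matrix.frobeniusNormedAddCommGroup Matrix.frobeniusNormedSpace
  Matrix.frobeniusNormedRing Matrix.frobeniusNormedAlgebra

section Aux

variable {n : ℕ} (E A : Matrix (Fin n) (Fin n) ℂ)

lemma hasDerivAt_res {s : ℂ} (hs : IsUnit (s • E - A)) :
    HasDerivAt (fun t : ℂ => (t • E - A)⁻¹)
      (-((s • E - A)⁻¹ * E * (s • E - A)⁻¹)) s := by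
  have haff := ((hasDerivAt_id' s).smul_const E).sub_const A
  simp only [one_smul] at haff
  have h1 := (hasFDerivAt_ringInverse (𝕜 := ℂ) hs.unit).comp_hasDerivAt s
    (by simpa only [hs.unit_spec] using haff)
  have hinv : ((hs.unit⁻¹ : _) : Matrix (Fin n) (Fin n) ℂ) = (s • E - A)⁻¹ := by
    have h := Ring.inverse_unit hs.unit
    rw [hs.unit_spec] at h
    rw [Matrix.nonsing_inv_eq_ringInverse]
    exact h.symm
  have hfun : (fun t : ℂ => (t • E - A)⁻¹) = fun t => Ring.inverse (t • E - A) := by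
    funext t; exact Matrix.nonsing_inv_eq_ringInverse _
  rw [hfun]
  simp only [hinv] at h1
  exact h1

lemma eventually_isUnit {s : ℂ} (hs : IsUnit (s • E - A)) :
    ∀ᶠ t in nhds s, IsUnit (t • E - A) := by
  have hcont : Continuous fun t : ℂ => (t • E - A).det :=
    Continuous.matrix_det (by continuity)
  have hne : (s • E - A).det ≠ 0 := by
    simpa [Matrix.isUnit_iff_isUnit_det, isUnit_iff_ne_zero] using hs
  have := hcont.continuousAt (x := s) (IsOpen.mem_nhds isOpen_compl_singleton hne)
  filter_upwards [this] with t ht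
  rw [Matrix.isUnit_iff_isUnit_det, isUnit_iff_ne_zero]
  exact ht

lemma hasDerivAt_h (i : ℕ) {s : ℂ} (hs : IsUnit (s • E - A)) :
    HasDerivAt (fun t : ℂ => ((t • E - A)⁻¹ * E) ^ i * (t • E - A)⁻¹)
      ((-(i + 1) : ℂ) • (((s • E - A)⁻¹ * E) ^ (i + 1) * (s • E - A)⁻¹)) s := by
  induction i with
  | zero =>
    simpa [pow_succ, mul_assoc, neg_smul, one_smul] using hasDerivAt_res E A hs
  | succ i ih =>
    have hres := hasDerivAt_res E A hs
    have h1 : HasDerivAt (fun t : ℂ => (t • E - A)⁻¹ * E)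
        (-((s • E - A)⁻¹ * E * (s • E - A)⁻¹) * E) s := hres.mul_const E
    have h2 := h1.mul ih
    convert h2 using 1
    · rfl
    · rfl
    · rfl
    · funext t
      rw [pow_succ', mul_assoc]
      rfl
    · simp only [pow_succ', mul_assoc, neg_mul, mul_neg, mul_smul_comm]
      match_scalars <;> push_cast <;> ring

end Aux

/-- The i-th derivative of the resolvent `s ↦ (sE - A)⁻¹` at `σ` equals
`(-1)^i i! ((σE-A)⁻¹ E)^i (σE-A)⁻¹`. -/
theorem resolvent_iterated_deriv (n : ℕ) (E A : Matrix (Fin n) (Fin n) ℂ) (σ : ℂ)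
    (hσ : IsUnit (σ • E - A)) (i : ℕ) :
    iteratedDeriv i (fun s : ℂ => (s • E - A)⁻¹) σ =
      ((-1 : ℂ) ^ i * (i.factorial : ℂ)) •
        (((σ • E - A)⁻¹ * E) ^ i * (σ • E - A)⁻¹) := by
  induction i generalizing σ with
  | zero => simp
  | succ i ih =>
    rw [iteratedDeriv_succ]
    have hev : iteratedDeriv i (fun s : ℂ => (s • E - A)⁻¹) =ᶠ[nhds σ]
        fun s : ℂ => ((-1 : ℂ) ^ i * (i.factorial : ℂ)) •
          (((s • E - A)⁻¹ * E) ^ i * (s • E - A)⁻¹) := by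
      filter_upwards [eventually_isUnit E A hσ] with t ht using ih t ht
    rw [hev.deriv_eq]
    have hd := ((hasDerivAt_h E A i hσ).const_smul ((-1 : ℂ) ^ i * (i.factorial : ℂ))).deriv
    erw [hd]
    rw [smul_smul]
    congr 1
    push_cast [Nat.factorial_succ, pow_succ]
    ring
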